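/- For all x > 0, ∫_0^x z² ν(z) dz ≤ (1/π) min(x, 2), where ν(z) = K_1(z)/(π z). -/

import Mathlib

open MeasureTheory Real Set

private lemma sqrt_ge_self (s : ℝ) : s ≤ Real.sqrt (1 + s ^ 2) := by
  nlinarith [Real.sqrt_nonneg (1 + s ^ 2), Real.sq_sqrt (show (0:ℝ) ≤ 1 + s ^ 2 by positivity)]

private lemma sqrt_ge_one (s : ℝ) : 1 ≤ Real.sqrt (1 + s ^ 2) := by
  nlinarith [Real.sqrt_nonneg (1 + s ^ 2), Real.sq_sqrt (show (0:ℝ) ≤ 1 + s ^ 2 by positivity)]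

private lemma dom_aux {z : ℝ} (hz : 0 < z) (s : ℝ) :
    Real.exp (-z * (Real.sqrt (1 + s ^ 2) - 1)) ≤ Real.exp z * Real.exp (-(z * s)) := by
  rw [← Real.exp_add]
  apply Real.exp_le_exp.mpr
  have h1 := sqrt_ge_self s
  nlinarith [mul_le_mul_of_nonneg_left (sub_le_sub_right h1 1) hz.le]

private lemma int_aux {z : ℝ} (hz : 0 < z) :
    IntegrableOn (fun s : ℝ => Real.exp (-z * (Real.sqrt (1 + s ^ 2) - 1))) (Ioi (0 : ℝ)) := by
  have hg : IntegrableOn (fun s : ℝ => Real.exp z * Real.exp (-(z * s))) (Ioi (0 : ℝ)) := by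
    exact (by simpa [neg_mul] using (exp_neg_integrableOn_Ioi 0 hz).const_mul (Real.exp z) :
      Integrable (fun s : ℝ => Real.exp z * Real.exp (-(z * s))) (volume.restrict (Ioi (0 : ℝ))))
  apply Integrable.mono hg
    (Continuous.aestronglyMeasurable (by fun_prop)).restrict
  filter_upwards with s
  rw [Real.norm_eq_abs, Real.norm_eq_abs, abs_of_pos (Real.exp_pos _),
    abs_of_pos (by positivity)]
  exact dom_aux hz s

private lemma I_le {z : ℝ} (hz : 0 < z) :
    (∫ s in Ioi (0 : ℝ), Real.exp (-z * (Real.sqrt (1 + s ^ 2) - 1))) ≤ 1 + 1 / z := by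
  have hsplit : (∫ s in Ioi (0 : ℝ), Real.exp (-z * (Real.sqrt (1 + s ^ 2) - 1)))
      = (∫ s in Ioc (0 : ℝ) 1, Real.exp (-z * (Real.sqrt (1 + s ^ 2) - 1)))
      + ∫ s in Ioi (1 : ℝ), Real.exp (-z * (Real.sqrt (1 + s ^ 2) - 1)) := by
    rw [← setIntegral_union (Set.Ioc_disjoint_Ioi le_rfl) measurableSet_Ioi
      ((int_aux hz).mono_set Ioc_subset_Ioi_self)
      ((int_aux hz).mono_set (Ioi_subset_Ioi zero_le_one)),
      Set.Ioc_union_Ioi_eq_Ioi zero_le_one]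
  rw [hsplit]
  have h1 : (∫ s in Ioc (0 : ℝ) 1, Real.exp (-z * (Real.sqrt (1 + s ^ 2) - 1))) ≤ 1 := by
    calc (∫ s in Ioc (0 : ℝ) 1, Real.exp (-z * (Real.sqrt (1 + s ^ 2) - 1)))
        ≤ ∫ _ in Ioc (0 : ℝ) 1, (1 : ℝ) := by
          apply setIntegral_mono_on ((int_aux hz).mono_set Ioc_subset_Ioi_self)
            (integrableOn_const measure_Ioc_lt_top.ne) measurableSet_Ioc
          intro s _
          apply Real.exp_le_one_iff.mpr
          have h := sqrt_ge_one s
          have : 0 ≤ z * (Real.sqrt (1 + s ^ 2) - 1) :=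
            mul_nonneg hz.le (by linarith)
          linarith
      _ = 1 := by simp
  have h2 : (∫ s in Ioi (1 : ℝ), Real.exp (-z * (Real.sqrt (1 + s ^ 2) - 1))) ≤ 1 / z := by
    have hgi0 : IntegrableOn (fun s : ℝ => Real.exp z * Real.exp (-(z * s))) (Ioi (0 : ℝ)) := by
      exact (by simpa [neg_mul] using (exp_neg_integrableOn_Ioi 0 hz).const_mul (Real.exp z) :
        Integrable (fun s : ℝ => Real.exp z * Real.exp (-(z * s))) (volume.restrict (Ioi (0 : ℝ))))
    have hgi : IntegrableOn (fun s : ℝ => Real.exp z * Real.exp (-(z * s))) (Ioi (1 : ℝ)) :=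
      hgi0.mono_set (Ioi_subset_Ioi zero_le_one)
    have hcomp : (∫ s in Ioi (1 : ℝ), Real.exp z * Real.exp (-(z * s))) = 1 / z := by
      rw [integral_const_mul]
      have : (∫ s in Ioi (1 : ℝ), Real.exp (-(z * s)))
          = z⁻¹ • ∫ t in Ioi (z * 1), Real.exp (-t) :=
        integral_comp_mul_left_Ioi (fun t => Real.exp (-t)) 1 hz
      rw [this, mul_one, integral_exp_neg_Ioi, smul_eq_mul,
        show Real.exp z * (z⁻¹ * Real.exp (-z)) = Real.exp z * Real.exp (-z) * z⁻¹ by ring,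
        ← Real.exp_add, add_neg_cancel, Real.exp_zero, one_mul, one_div]
    calc (∫ s in Ioi (1 : ℝ), Real.exp (-z * (Real.sqrt (1 + s ^ 2) - 1)))
        ≤ ∫ s in Ioi (1 : ℝ), Real.exp z * Real.exp (-(z * s)) := by
          apply setIntegral_mono_on ((int_aux hz).mono_set (Ioi_subset_Ioi zero_le_one))
            hgi measurableSet_Ioi
          exact fun s _ => dom_aux hz s
      _ = 1 / z := hcomp
  linarith

private lemma interval_le (x : ℝ) (hx : 0 < x) :
    (∫ z in (0 : ℝ)..x, (1 + z) * Real.exp (-z)) ≤ min x 2 := by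
  have hderiv : ∀ z : ℝ, HasDerivAt (fun t => -(2 + t) * Real.exp (-t))
      ((1 + z) * Real.exp (-z)) z := by
    intro z
    have h1 : HasDerivAt (fun t : ℝ => -(2 + t)) (-1) z := by
      exact ((hasDerivAt_id z).const_add 2).neg
    have h2 : HasDerivAt (fun t : ℝ => Real.exp (-t)) (-Real.exp (-z)) z := by
      simpa using (hasDerivAt_neg z).exp
    have := h1.mul h2
    exact this.congr_deriv (by ring)
  have hcont : Continuous (fun z : ℝ => (1 + z) * Real.exp (-z)) := by fun_prop
  have heq : (∫ z in (0 : ℝ)..x, (1 + z) * Real.exp (-z))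
      = -(2 + x) * Real.exp (-x) + 2 := by
    rw [intervalIntegral.integral_eq_sub_of_hasDerivAt (fun z _ => hderiv z)
      (hcont.intervalIntegrable 0 x)]
    norm_num
  apply le_min
  · calc (∫ z in (0 : ℝ)..x, (1 + z) * Real.exp (-z))
        ≤ ∫ _ in (0 : ℝ)..x, (1 : ℝ) := by
          apply intervalIntegral.integral_mono_on hx.le (hcont.intervalIntegrable 0 x)
            intervalIntegrable_const
          intro z _
          have h2 : 0 < Real.exp (-z) := Real.exp_pos _
          calc (1 + z) * Real.exp (-z) ≤ Real.exp z * Real.exp (-z) := by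
                apply mul_le_mul_of_nonneg_right _ h2.le
                linarith [Real.add_one_le_exp z]
            _ = 1 := by rw [← Real.exp_add]; simp
      _ = x := by simp
  · rw [heq]
    have : 0 ≤ (2 + x) * Real.exp (-x) := by positivity
    linarith

theorem nu_small_bound (K₁ ν : ℝ → ℝ)
    (hK : ∀ z : ℝ, 0 < z →
      K₁ z = Real.exp (-z) * ∫ s in Set.Ioi (0 : ℝ), Real.exp (-z * (Real.sqrt (1 + s ^ 2) - 1)))
    (hν : ∀ z : ℝ, 0 < z → ν z = K₁ z / (Real.pi * z))
    (x : ℝ) (hx : 0 < x) :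
    ∫ z in Set.Ioo (0 : ℝ) x, z ^ 2 * ν z ≤ (1 / Real.pi) * min x 2 := by
  have hπ : 0 < Real.pi := Real.pi_pos
  have hrhs : 0 ≤ (1 / Real.pi) * min x 2 := by
    apply mul_nonneg (by positivity)
    exact le_min hx.le (by norm_num)
  have hbound : ∀ z ∈ Ioo (0 : ℝ) x, z ^ 2 * ν z ≤ (1 + z) * Real.exp (-z) / Real.pi := by
    intro z hz
    have hz0 : 0 < z := hz.1
    rw [hν z hz0, hK z hz0]
    set I := ∫ s in Ioi (0 : ℝ), Real.exp (-z * (Real.sqrt (1 + s ^ 2) - 1)) with hIdef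
    have hIle : I ≤ 1 + 1 / z := I_le hz0
    have hInn : 0 ≤ I := setIntegral_nonneg measurableSet_Ioi fun s _ => (Real.exp_pos _).le
    have key : z ^ 2 * (Real.exp (-z) * I / (Real.pi * z))
        = z * Real.exp (-z) * I / Real.pi := by
      field_simp
    rw [key]
    have hAB : z * Real.exp (-z) * I ≤ (1 + z) * Real.exp (-z) := by
      calc z * Real.exp (-z) * I ≤ z * Real.exp (-z) * (1 + 1 / z) :=
            mul_le_mul_of_nonneg_left hIle (by positivity)
        _ = (1 + z) * Real.exp (-z) := by field_simp; ring
    exact div_le_div_of_nonneg_right hAB hπ.le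
  have hnn : ∀ z ∈ Ioo (0 : ℝ) x, 0 ≤ z ^ 2 * ν z := by
    intro z hz
    have hz0 : 0 < z := hz.1
    rw [hν z hz0, hK z hz0]
    have : 0 ≤ ∫ s in Ioi (0 : ℝ), Real.exp (-z * (Real.sqrt (1 + s ^ 2) - 1)) :=
      setIntegral_nonneg measurableSet_Ioi (fun s _ => (Real.exp_pos _).le)
    positivity
  have hgcont : Continuous (fun z : ℝ => (1 + z) * Real.exp (-z) / Real.pi) := by fun_prop
  have hgint : IntegrableOn (fun z : ℝ => (1 + z) * Real.exp (-z) / Real.pi) (Ioo (0 : ℝ) x) :=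
    (hgcont.integrableOn_Icc).mono_set Ioo_subset_Icc_self
  have hgval : (∫ z in Ioo (0 : ℝ) x, (1 + z) * Real.exp (-z) / Real.pi)
      ≤ (1 / Real.pi) * min x 2 := by
    rw [← MeasureTheory.integral_Ioc_eq_integral_Ioo,
      ← intervalIntegral.integral_of_le hx.le]
    have heq2 : (∫ z in (0 : ℝ)..x, (1 + z) * Real.exp (-z) / Real.pi)
        = (1 / Real.pi) * ∫ z in (0 : ℝ)..x, (1 + z) * Real.exp (-z) := by
      rw [← intervalIntegral.integral_const_mul]
      congr 1
      ext z
      field_simp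
    rw [heq2]
    exact mul_le_mul_of_nonneg_left (interval_le x hx) (by positivity)
  by_cases hint : IntegrableOn (fun z : ℝ => z ^ 2 * ν z) (Ioo (0 : ℝ) x)
  · calc (∫ z in Ioo (0 : ℝ) x, z ^ 2 * ν z)
        ≤ ∫ z in Ioo (0 : ℝ) x, (1 + z) * Real.exp (-z) / Real.pi :=
          setIntegral_mono_on hint hgint measurableSet_Ioo hbound
      _ ≤ (1 / Real.pi) * min x 2 := hgval
  · rw [integral_undef hint]
    exact hrhs
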